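/- Let n be a positive integer and let x, z be n×n complex matrices such that I − x xᴴ and I − xᴴ x are (Hermitian) positive definite. Then (I − x xᴴ)^{1/2} z (I − xᴴ x)^{−1/2} + x = (I − x xᴴ)^{1/2} (z + x) (I − xᴴ x)^{−1/2}. -/

import Mathlib

open Matrix
open scoped ComplexOrder

/-- The positive semidefinite square root of a positive semidefinite matrix
(the definition `Matrix.PosSemidef.sqrt` of the older Mathlib, removed since). -/
noncomputable def Matrix.PosSemidef.sqrt {n 𝕜 : Type*} [Fintype n] [DecidableEq n] [RCLike 𝕜]
    {A : Matrix n n 𝕜} (hA : A.PosSemidef) : Matrix n n 𝕜 :=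
  hA.1.eigenvectorUnitary.1 * diagonal ((↑) ∘ (√·) ∘ hA.1.eigenvalues) *
    (star hA.1.eigenvectorUnitary : Matrix n n 𝕜)

lemma Matrix.PosSemidef.posSemidef_sqrt {n 𝕜 : Type*} [Fintype n] [DecidableEq n] [RCLike 𝕜]
    {A : Matrix n n 𝕜} (hA : A.PosSemidef) : hA.sqrt.PosSemidef := by
  unfold Matrix.PosSemidef.sqrt
  have hD : (diagonal ((↑) ∘ (√·) ∘ hA.1.eigenvalues) : Matrix n n 𝕜).PosSemidef :=
    Matrix.posSemidef_diagonal_iff.mpr fun i => by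
      simp only [Function.comp_apply]
      exact_mod_cast Real.sqrt_nonneg _
  exact hD.mul_mul_conjTranspose_same (hA.1.eigenvectorUnitary : Matrix n n 𝕜)

lemma Matrix.PosSemidef.sqrt_mul_self {n 𝕜 : Type*} [Fintype n] [DecidableEq n] [RCLike 𝕜]
    {A : Matrix n n 𝕜} (hA : A.PosSemidef) : hA.sqrt * hA.sqrt = A := by
  unfold Matrix.PosSemidef.sqrt
  have hU : (star hA.1.eigenvectorUnitary : Matrix n n 𝕜) * hA.1.eigenvectorUnitary = 1 :=
    Unitary.coe_star_mul_self _
  have hDD : (diagonal ((↑) ∘ (√·) ∘ hA.1.eigenvalues) : Matrix n n 𝕜) *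
      diagonal ((↑) ∘ (√·) ∘ hA.1.eigenvalues) = diagonal (RCLike.ofReal ∘ hA.1.eigenvalues) := by
    rw [diagonal_mul_diagonal]
    congr 1
    funext i
    simp only [Function.comp_apply]
    rw [← RCLike.ofReal_mul, Real.mul_self_sqrt (hA.eigenvalues_nonneg i)]
  conv_rhs => rw [hA.1.spectral_theorem]
  rw [Unitary.conjStarAlgAut_apply, ← hDD]
  calc _ = (hA.1.eigenvectorUnitary : Matrix n n 𝕜) * diagonal ((↑) ∘ (√·) ∘ hA.1.eigenvalues) *
        ((star hA.1.eigenvectorUnitary : Matrix n n 𝕜) * (hA.1.eigenvectorUnitary : Matrix n n 𝕜)) *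
        diagonal ((↑) ∘ (√·) ∘ hA.1.eigenvalues) * (star hA.1.eigenvectorUnitary : Matrix n n 𝕜) := by
          simp only [Matrix.mul_assoc]
    _ = _ := by rw [hU, Matrix.mul_one]; simp only [Matrix.mul_assoc]

lemma trace_conjTranspose_mul_self_nonneg' {m : ℕ} (A : Matrix (Fin m) (Fin m) ℂ) :
    0 ≤ (Aᴴ * A).trace := by
  have : (Aᴴ * A).trace = ∑ j, ∑ k, star (A k j) * A k j := by
    simp [Matrix.trace, Matrix.diag, Matrix.mul_apply, Matrix.conjTranspose_apply]
  rw [this]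
  exact Finset.sum_nonneg fun j _ => Finset.sum_nonneg fun k _ => star_mul_self_nonneg _

lemma trace_conjTranspose_mul_self_eq_zero' {m : ℕ} {A : Matrix (Fin m) (Fin m) ℂ}
    (h : (Aᴴ * A).trace = 0) : A = 0 := by
  have hall : ∀ j k, star (A k j) * A k j = 0 := by
    have hsum : ∑ j, ∑ k, star (A k j) * A k j = 0 := by
      simpa [Matrix.trace, Matrix.diag, Matrix.mul_apply, Matrix.conjTranspose_apply] using h
    have h1 := (Finset.sum_eq_zero_iff_of_nonneg (fun j _ =>
      Finset.sum_nonneg fun k _ => star_mul_self_nonneg (A k j))).mp hsum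
    exact fun j k => (Finset.sum_eq_zero_iff_of_nonneg (fun k _ =>
      star_mul_self_nonneg (A k j))).mp (h1 j (Finset.mem_univ j)) k (Finset.mem_univ k)
  ext k j
  have := hall j k
  simpa [mul_comm, Complex.star_def, Complex.mul_conj', Complex.normSq_eq_zero] using this

set_option maxHeartbeats 1000000 in
/-- Intermediate identity in the proof of Proposition 6.2:
`(I - x xᴴ)^{1/2} z (I - xᴴ x)^{-1/2} + x = (I - x xᴴ)^{1/2} (z + x) (I - xᴴ x)^{-1/2}`. -/
theorem siegel_disk_tilde_plus_identity {n : ℕ} (hn : 0 < n)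
    (x z : Matrix (Fin n) (Fin n) ℂ)
    (h1 : (1 - x * xᴴ).PosDef) (h2 : (1 - xᴴ * x).PosDef) :
    h1.posSemidef.sqrt * z * (h2.posSemidef.sqrt)⁻¹ + x =
      h1.posSemidef.sqrt * (z + x) * (h2.posSemidef.sqrt)⁻¹ := by
  set S := h1.posSemidef.sqrt with hSdef
  set T := h2.posSemidef.sqrt with hTdef
  have hS : S.PosSemidef := h1.posSemidef.posSemidef_sqrt
  have hT : T.PosSemidef := h2.posSemidef.posSemidef_sqrt
  have hSS : S * S = 1 - x * xᴴ := h1.posSemidef.sqrt_mul_self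
  have hTT : T * T = 1 - xᴴ * x := h2.posSemidef.sqrt_mul_self
  -- S and T are invertible
  have hdetS : IsUnit S.det := by
    have : S.det * S.det = (1 - x * xᴴ).det := by rw [← Matrix.det_mul, hSS]
    have hne : S.det ≠ 0 := by
      intro h0
      rw [h0, mul_zero] at this
      exact h1.det_pos.ne' this.symm
    exact hne.isUnit
  have hdetT : IsUnit T.det := by
    have : T.det * T.det = (1 - xᴴ * x).det := by rw [← Matrix.det_mul, hTT]
    have hne : T.det ≠ 0 := by
      intro h0
      rw [h0, mul_zero] at this
      exact h2.det_pos.ne' this.symm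
    exact hne.isUnit
  -- the key commutation: S * x = x * T
  set M := S * x - x * T with hMdef
  have key : S * M + M * T = 0 := by
    have : S * M + M * T = (S * S) * x - x * (T * T) := by rw [hMdef]; noncomm_ring
    rw [this, hSS, hTT]
    noncomm_ring
  have htr : (Mᴴ * (S * M)).trace + (Mᴴ * (M * T)).trace = 0 := by
    rw [← Matrix.trace_add, ← Matrix.mul_add, key, Matrix.mul_zero, Matrix.trace_zero]
  set P := hS.sqrt with hPdef
  have hPP : P * P = S := hS.sqrt_mul_self
  have hPH : Pᴴ = P := hS.posSemidef_sqrt.isHermitian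
  set Q := hT.sqrt with hQdef
  have hQQ : Q * Q = T := hT.sqrt_mul_self
  have hQH : Qᴴ = Q := hT.posSemidef_sqrt.isHermitian
  have e1 : Mᴴ * (S * M) = (P * M)ᴴ * (P * M) := by
    rw [Matrix.conjTranspose_mul, hPH, ← hPP]
    noncomm_ring
  have e2 : (Mᴴ * (M * T)).trace = ((M * Q)ᴴ * (M * Q)).trace := by
    have h' : Mᴴ * (M * T) = (Mᴴ * (M * Q)) * Q := by rw [← hQQ]; noncomm_ring
    have h'' : Q * (Mᴴ * (M * Q)) = (M * Q)ᴴ * (M * Q) := by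
      rw [Matrix.conjTranspose_mul, hQH]; noncomm_ring
    rw [h', Matrix.trace_mul_comm, h'']
  have t1 : 0 ≤ (Mᴴ * (S * M)).trace := e1 ▸ trace_conjTranspose_mul_self_nonneg' (P * M)
  have t2 : 0 ≤ (Mᴴ * (M * T)).trace := e2 ▸ trace_conjTranspose_mul_self_nonneg' (M * Q)
  have t1z : (Mᴴ * (S * M)).trace = 0 := by
    have h' : (Mᴴ * (S * M)).trace = -((Mᴴ * (M * T)).trace) :=
      eq_neg_of_add_eq_zero_left htr
    exact le_antisymm (h' ▸ neg_nonpos_of_nonneg t2) t1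
  have hPM : P * M = 0 := trace_conjTranspose_mul_self_eq_zero' (e1 ▸ t1z)
  have hSM : S * M = 0 := by rw [← hPP, Matrix.mul_assoc, hPM, Matrix.mul_zero]
  have hM0 : M = 0 := by
    calc M = S⁻¹ * (S * M) := by rw [← Matrix.mul_assoc, Matrix.nonsing_inv_mul S hdetS, one_mul]
    _ = 0 := by rw [hSM, Matrix.mul_zero]
  have hST : S * x = x * T := sub_eq_zero.mp hM0
  -- finish
  have hx : S * x * T⁻¹ = x := by
    rw [hST, Matrix.mul_assoc, Matrix.mul_nonsing_inv T hdetT, Matrix.mul_one]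
  rw [Matrix.mul_add, Matrix.add_mul, hx]
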